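/- Let ∇ be a linear connection with ∇P = 0 for an almost product structure P. Define S_P(X,Y) = (∇_X P)Y + P((∇_{PX} P)Y). Then S_P = 0. Conversely, on an almost product Riemannian manifold (pure metric, Levi-Civita connection), S_P = 0 implies ∇P = 0. -/

import Mathlib

/-- Let `∇` be a linear connection on an almost product Riemannian manifold, i.e. the
metric `h` is pure with respect to `P` and `∇` is the Levi-Civita connection (metric
compatible, where `D X` denotes differentiation of functions along `X`).  With
`S_P(X,Y) = (∇_X P)Y + P((∇_{PX}P)Y)`:  if `∇P = 0` then `S_P = 0`, and conversely
`S_P = 0` implies `∇P = 0`. -/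
theorem parallel_iff_S_vanishes
    (A : Type*) [CommRing A] [Algebra ℝ A]
    (V : Type*) [AddCommGroup V] [Module A V]
    (nabla : V → V → V) (D : V → A → A)
    (P : V →ₗ[A] V) (hP : P ∘ₗ P = LinearMap.id)
    (h : V →ₗ[A] V →ₗ[A] A)
    (hsymm : ∀ X Y : V, h X Y = h Y X)
    (hpure : ∀ X Y : V, h (P X) Y = h X (P Y))
    (hnondeg : ∀ Y : V, (∀ X : V, h X Y = 0) → Y = 0)
    (haddl : ∀ X Y Z : V, nabla (X + Y) Z = nabla X Z + nabla Y Z)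
    (haddr : ∀ X Y Z : V, nabla X (Y + Z) = nabla X Y + nabla X Z)
    (hfunl : ∀ (a : A) (X Y : V), nabla (a • X) Y = a • nabla X Y)
    (hleib : ∀ (a : A) (X Y : V), nabla X (a • Y) = D X a • Y + a • nabla X Y)
    (hcompat : ∀ X Y Z : V, D X (h Y Z) = h (nabla X Y) Z + h Y (nabla X Z)) :
    ((∀ X Y : V, nabla X (P Y) - P (nabla X Y) = 0) →
      (∀ X Y : V, (nabla X (P Y) - P (nabla X Y)) +
        P (nabla (P X) (P Y) - P (nabla (P X) Y)) = 0)) ∧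
    ((∀ X Y : V, (nabla X (P Y) - P (nabla X Y)) +
        P (nabla (P X) (P Y) - P (nabla (P X) Y)) = 0) →
      (∀ X Y : V, nabla X (P Y) - P (nabla X Y) = 0)) := by
  have hPP : ∀ v : V, P (P v) = v := by
    intro v
    have := LinearMap.ext_iff.mp hP v
    simpa using this
  constructor
  · intro hpar X Y
    rw [hpar X Y, hpar (P X) Y, map_zero, add_zero]
  · intro hS
    set Q : V → V → V := fun X Y => nabla X (P Y) - P (nabla X Y) with hQdef
    -- invertibility of 2 helpers
    have inv2 : (algebraMap ℝ A (1/2)) * 2 = 1 := by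
      rw [show (2:A) = algebraMap ℝ A 2 from (map_ofNat (algebraMap ℝ A) 2).symm, ← map_mul]
      norm_num
    have hhalfV : ∀ v : V, v + v = 0 → v = 0 := by
      intro v hv
      have h2 : (algebraMap ℝ A (1/2)) • ((2:A) • v) = 0 := by
        rw [two_smul, hv, smul_zero]
      rwa [smul_smul, inv2, one_smul] at h2
    have hhalfA : ∀ a : A, a + a = 0 → a = 0 := by
      intro a ha
      have h2 : (algebraMap ℝ A (1/2)) * ((2:A) * a) = 0 := by
        rw [two_mul, ha, mul_zero]
      rwa [← mul_assoc, inv2, one_mul] at h2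
    -- additivity of Q
    have hQaddr : ∀ X Y Z : V, Q X (Y + Z) = Q X Y + Q X Z := by
      intro X Y Z
      simp only [hQdef, map_add, haddr]
      abel
    have hQaddl : ∀ X Y Z : V, Q (X + Y) Z = Q X Z + Q Y Z := by
      intro X Y Z
      simp only [hQdef, haddl, map_add]
      abel
    have hN0 : ∀ X : V, nabla X 0 = 0 := by
      intro X
      have h0 := haddr X 0 0
      rw [add_zero] at h0
      exact right_eq_add.mp h0
    have hQ0 : ∀ X : V, Q X 0 = 0 := by
      intro X
      simp only [hQdef, map_zero, hN0]
      simp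
    have hQneg₂ : ∀ X Y : V, Q X (-Y) = -Q X Y := by
      intro X Y
      have h1 := hQaddr X Y (-Y)
      rw [add_neg_cancel, hQ0] at h1
      exact (neg_eq_of_add_eq_zero_right h1.symm).symm
    have hQnegl : ∀ X Y : V, Q (-X) Y = -Q X Y := by
      intro X Y
      have h1 : Q (-X) Y = Q ((-1 : A) • X) Y := by rw [neg_one_smul]
      simp only [hQdef] at h1 ⊢
      rw [h1, hfunl, hfunl, neg_one_smul, neg_one_smul, map_neg]
      abel
    -- (i) : Q X (P Y) = - P (Q X Y)
    have hi : ∀ X Y : V, Q X (P Y) = -P (Q X Y) := by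
      intro X Y
      simp only [hQdef, map_sub, hPP]
      abel
    -- star : Q (P X) Y = Q X (P Y)
    have hstar : ∀ X Y : V, Q (P X) Y = Q X (P Y) := by
      intro X Y
      have hs' : Q X Y + P (Q (P X) Y) = 0 := hS X Y
      have h1 : P (Q X Y) + P (P (Q (P X) Y)) = P 0 := by
        rw [← map_add, hs']
      rw [hPP, map_zero] at h1
      have h2 : Q (P X) Y = -P (Q X Y) := (neg_eq_of_add_eq_zero_right h1).symm
      rw [h2, hi]
    -- symmetry : h (Q X Y) Z = h Y (Q X Z)
    have hsymQ : ∀ X Y Z : V, h (Q X Y) Z = h Y (Q X Z) := by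
      intro X Y Z
      have e1 := hcompat X (P Y) Z
      have e2 := hcompat X Y (P Z)
      have e3 : h (P Y) Z = h Y (P Z) := hpure Y Z
      rw [e3] at e1
      have e4 : h (P (nabla X Y)) Z = h (nabla X Y) (P Z) := hpure _ _
      have e5 : h Y (P (nabla X Z)) = h (P Y) (nabla X Z) := (hpure Y _).symm
      simp only [hQdef, map_sub, LinearMap.sub_apply]
      linear_combination -e1 + e2 - e4 + e5
    -- mixed vanishing
    have hm1 : ∀ W U : V, P W = W → P U = -U → Q W U = 0 := by
      intro W U hW hU
      have h1 : Q W U = Q W (-U) := by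
        rw [← hU, ← hstar, hW]
      rw [hQneg₂] at h1
      exact hhalfV _ (by nth_rewrite 1 [h1]; abel)
    have hm2 : ∀ W U : V, P W = -W → P U = U → Q W U = 0 := by
      intro W U hW hU
      have h1 : Q (-W) U = Q W U := by
        rw [← hW, hstar, hU]
      rw [hQnegl] at h1
      exact hhalfV _ (by nth_rewrite 1 [← h1]; abel)
    -- plus-plus vanishing
    have hpp : ∀ W U : V, P W = W → P U = U → Q W U = 0 := by
      intro W U hW hU
      have h1 := hi W U
      rw [hU] at h1
      -- h1 : Q W U = -P (Q W U)
      have hPv : P (Q W U) = -Q W U := by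
        have h2 : Q W U + P (Q W U) = 0 := by nth_rewrite 1 [h1]; abel
        exact (neg_eq_of_add_eq_zero_right h2).symm
      apply hnondeg
      intro Z
      rw [hsymm]
      have hz1 : h (Q W U) (Z + P Z) = 0 := by
        rw [map_add, ← hpure (Q W U) Z, hPv, map_neg, LinearMap.neg_apply]
        abel
      have hz2 : h (Q W U) (Z - P Z) = 0 := by
        rw [hsymQ]
        have hq : Q W (Z - P Z) = 0 := by
          apply hm1 _ _ hW
          rw [map_sub, hPP]
          abel
        rw [hq, map_zero]
      have hz3 : h (Q W U) (Z + Z) = 0 := by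
        have he : (Z + P Z) + (Z - P Z) = Z + Z := by abel
        rw [← he, map_add, hz1, hz2, add_zero]
      rw [map_add] at hz3
      exact hhalfA _ hz3
    -- minus-minus vanishing
    have hmm : ∀ W U : V, P W = -W → P U = -U → Q W U = 0 := by
      intro W U hW hU
      have h1 := hi W U
      rw [hU, hQneg₂] at h1
      -- h1 : -Q W U = -P (Q W U)
      have hPv : P (Q W U) = Q W U := (neg_injective h1).symm
      apply hnondeg
      intro Z
      rw [hsymm]
      have hz1 : h (Q W U) (Z - P Z) = 0 := by
        rw [map_sub, ← hpure (Q W U) Z, hPv, sub_self]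
      have hz2 : h (Q W U) (Z + P Z) = 0 := by
        rw [hsymQ]
        have hq : Q W (Z + P Z) = 0 := by
          apply hm2 _ _ hW
          rw [map_add, hPP]
          abel
        rw [hq, map_zero]
      have hz3 : h (Q W U) (Z + Z) = 0 := by
        have he : (Z + P Z) + (Z - P Z) = Z + Z := by abel
        rw [← he, map_add, hz1, hz2, add_zero]
      rw [map_add] at hz3
      exact hhalfA _ hz3
    -- assemble
    intro X Y
    show Q X Y = 0
    have hXp : P (X + P X) = X + P X := by rw [map_add, hPP]; abel
    have hXm : P (X - P X) = -(X - P X) := by rw [map_sub, hPP]; abel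
    have hYp : P (Y + P Y) = Y + P Y := by rw [map_add, hPP]; abel
    have hYm : P (Y - P Y) = -(Y - P Y) := by rw [map_sub, hPP]; abel
    have hsum : Q ((X + P X) + (X - P X)) ((Y + P Y) + (Y - P Y)) = 0 := by
      rw [hQaddl, hQaddr (X + P X) (Y + P Y) (Y - P Y),
        hQaddr (X - P X) (Y + P Y) (Y - P Y),
        hpp _ _ hXp hYp, hm1 _ _ hXp hYm, hm2 _ _ hXm hYp, hmm _ _ hXm hYm]
      abel
    have he1 : (X + P X) + (X - P X) = X + X := by abel
    have he2 : (Y + P Y) + (Y - P Y) = Y + Y := by abel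
    rw [he1, he2, hQaddl X X (Y + Y), hQaddr X Y Y] at hsum
    exact hhalfV _ (hhalfV _ hsum)
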